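/- For any two distinct points ξ, η on the unit circle, the integral ∫₀^π d_I(⟨ξ,u_θ⟩, ⟨η,u_θ⟩) dθ diverges; i.e., every full Euclidean chord of the unit disk has infinite D-length. -/

import Mathlib

open Real MeasureTheory Set

/-- f(t) = t/(1-|t|) -/
noncomputable def f (t : ℝ) : ℝ := t / (1 - |t|)

/-- d_I(s,t) = |f(s) - f(t)| -/
noncomputable def dI (s t : ℝ) : ℝ := |f s - f t|

/-- the unit direction u_θ = (cos θ, sin θ) -/
noncomputable def u (θ : ℝ) : EuclideanSpace ℝ (Fin 2) := !₂[Real.cos θ, Real.sin θ]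

/-- D(x,y) = ∫₀^π d_I(⟨x,u_θ⟩, ⟨y,u_θ⟩) dθ -/
noncomputable def Dmet (x y : EuclideanSpace ℝ (Fin 2)) : ℝ :=
  ∫ θ in (0:ℝ)..π, dI (inner ℝ x (u θ) : ℝ) (inner ℝ y (u θ) : ℝ)

lemma f_neg (s : ℝ) : f (-s) = - f s := by simp [f, neg_div]

lemma abs_f {s : ℝ} (h : |s| < 1) : |f s| = |s| / (1 - |s|) := by
  rw [f, abs_div, abs_of_pos (by linarith : (0:ℝ) < 1 - |s|)]

lemma f_upper {r s : ℝ} (hr : r < 1) (h : |s| ≤ r) : |f s| ≤ r / (1 - r) := by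
  have h1 : |s| < 1 := lt_of_le_of_lt h hr
  rw [abs_f h1, div_le_div_iff₀ (by linarith) (by linarith)]
  nlinarith [abs_nonneg s]

lemma f_lower {d s : ℝ} (hd0 : d ≠ 0) (hd1 : |d| ≤ 1) (hs : |s| = |Real.cos d|) :
    (d ^ 2)⁻¹ ≤ |f s| := by
  have hd2 : d ^ 2 ≤ 1 := by nlinarith [sq_abs d, abs_nonneg d]
  have h2 : 1 - d ^ 2 / 2 ≤ Real.cos d := Real.one_sub_sq_div_two_le_cos
  have hch : (1:ℝ)/2 ≤ Real.cos d := by linarith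
  have hclt : Real.cos d < 1 := by
    rcases lt_or_eq_of_le (Real.cos_le_one d) with h | h
    · exact h
    · exfalso; apply hd0
      have h3 : Real.pi > 3 := Real.pi_gt_three
      have := abs_le.mp hd1
      exact (Real.cos_eq_one_iff_of_lt_of_lt (by linarith) (by linarith)).mp h
  have habs : |Real.cos d| = Real.cos d := abs_of_pos (by linarith)
  rw [habs] at hs
  have hs1 : |s| < 1 := by rw [hs]; exact hclt
  rw [abs_f hs1, hs, le_div_iff₀ (by linarith)]
  have hp : (0:ℝ) < d ^ 2 := by positivity
  have e1 : (d ^ 2)⁻¹ * (1 - Real.cos d) ≤ (d ^ 2)⁻¹ * (d ^ 2 / 2) :=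
    mul_le_mul_of_nonneg_left (by linarith) (by positivity)
  have e2 : (d ^ 2)⁻¹ * (d ^ 2 / 2) = 1 / 2 := by field_simp
  linarith

lemma aux_arith {d M : ℝ} (hM : 0 ≤ M) (h0 : 0 < |d|) (h : |d| < (2 * (M + 1))⁻¹) :
    |d|⁻¹ ≤ (d ^ 2)⁻¹ - M := by
  have h2 : (0:ℝ) < 2 * (M + 1) := by linarith
  have hd1 : |d| < 1 := lt_of_lt_of_le h (by rw [inv_le_one₀ h2]; linarith)
  have hmul : |d| * (2 * (M + 1)) < 1 := by
    calc |d| * (2 * (M + 1)) < (2 * (M + 1))⁻¹ * (2 * (M + 1)) :=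
          mul_lt_mul_of_pos_right h h2
      _ = 1 := inv_mul_cancel₀ (ne_of_gt h2)
  have key : |d| + M * |d| ^ 2 ≤ 1 := by nlinarith [sq_abs d, abs_nonneg d]
  have hsq : (0:ℝ) < |d| ^ 2 := by positivity
  have e : d ^ 2 = |d| ^ 2 := (sq_abs d).symm
  rw [e, le_sub_iff_add_le, show (|d| ^ 2)⁻¹ = 1 / |d| ^ 2 by rw [one_div],
    le_div_iff₀ hsq]
  have : |d|⁻¹ * |d| ^ 2 = |d| := by field_simp [ne_of_gt h0]
  nlinarith

lemma exists_angle (ζ : EuclideanSpace ℝ (Fin 2)) (hζ : ‖ζ‖ = 1) :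
    ∃ a : ℝ, ζ 0 = Real.cos a ∧ ζ 1 = Real.sin a := by
  have hsum : ζ 0 ^ 2 + ζ 1 ^ 2 = 1 := by
    rw [EuclideanSpace.norm_eq] at hζ
    have hnn : (0:ℝ) ≤ ∑ i : Fin 2, ‖ζ i‖ ^ 2 := Finset.sum_nonneg fun i _ => sq_nonneg _
    have h2 : (∑ i : Fin 2, ‖ζ i‖ ^ 2) = 1 := by nlinarith [Real.sq_sqrt hnn]
    simpa [Fin.sum_univ_two, Real.norm_eq_abs, sq_abs] using h2
  set z : ℂ := ⟨ζ 0, ζ 1⟩ with hzdef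
  have hre : z.re = ζ 0 := rfl
  have him : z.im = ζ 1 := rfl
  have habs : ‖z‖ = 1 := by
    rw [Complex.norm_def, Complex.normSq_apply, hre, him,
      show ζ 0 * ζ 0 + ζ 1 * ζ 1 = 1 by nlinarith]
    exact Real.sqrt_one
  have hz : z ≠ 0 := by intro h; rw [h] at habs; simp at habs
  refine ⟨Complex.arg z, ?_, ?_⟩
  · rw [Complex.cos_arg hz, habs, hre]; simp
  · rw [Complex.sin_arg, habs, him]; simp

lemma inner_u (ζ : EuclideanSpace ℝ (Fin 2)) (c θ : ℝ) (h0 : ζ 0 = Real.cos c)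
    (h1 : ζ 1 = Real.sin c) : (inner ℝ ζ (u θ) : ℝ) = Real.cos (θ - c) := by
  rw [Real.cos_sub]
  simp [u, PiLp.inner_apply, RCLike.inner_apply, Fin.sum_univ_two, h0, h1]

lemma norm_u (θ : ℝ) : ‖u θ‖ = 1 := by
  rw [EuclideanSpace.norm_eq, Fin.sum_univ_two]
  have : ‖u θ 0‖ ^ 2 + ‖u θ 1‖ ^ 2 = 1 := by
    simp [u, Real.norm_eq_abs, sq_abs]
  rw [this]; exact Real.sqrt_one

theorem chord_has_infinite_length (ξ η : EuclideanSpace ℝ (Fin 2))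
    (hξ : ‖ξ‖ = 1) (hη : ‖η‖ = 1) (hne : ξ ≠ η) :
    ¬ IntervalIntegrable (fun θ => dI (inner ℝ ξ (u θ) : ℝ) (inner ℝ η (u θ) : ℝ)) volume 0 π := by
  obtain ⟨a, ha0, ha1⟩ := exists_angle ξ hξ
  obtain ⟨b, hb0, hb1⟩ := exists_angle η hη
  have hsξ : ∀ θ, (inner ℝ ξ (u θ) : ℝ) = Real.cos (θ - a) := fun θ => inner_u ξ a θ ha0 ha1
  have hsη : ∀ θ, (inner ℝ η (u θ) : ℝ) = Real.cos (θ - b) := fun θ => inner_u η b θ hb0 hb1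
  have hπ : (0:ℝ) < π := pi_pos
  set k : ℤ := ⌊a / π⌋ with hk
  set θ₀ : ℝ := a - k * π with hθ₀def
  have hθ₀0 : 0 ≤ θ₀ := by
    have h1 : (k:ℝ) ≤ a / π := Int.floor_le (a / π)
    have h2 : (k:ℝ) * π ≤ a := (le_div_iff₀ hπ).mp h1
    simp [hθ₀def]; linarith
  have hθ₀π : θ₀ < π := by
    have h1 : a / π < k + 1 := Int.lt_floor_add_one (a / π)
    have h2 : a < ((k:ℝ) + 1) * π := (div_lt_iff₀ hπ).mp h1
    simp [hθ₀def]; nlinarith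
  set v : EuclideanSpace ℝ (Fin 2) := u θ₀ with hv
  have habsθ : ∀ θ, |(inner ℝ ξ (u θ) : ℝ)| = |Real.cos (θ - θ₀)| := by
    intro θ
    rw [hsξ θ, show θ - a = (θ - θ₀) - k * π by rw [hθ₀def]; ring,
      Real.cos_sub_int_mul_pi, abs_mul,
      show |(-1:ℝ) ^ k| = 1 from by
        rcases Int.even_or_odd k with he | ho
        · rw [he.neg_one_zpow, abs_one]
        · rw [ho.neg_one_zpow, abs_neg, abs_one], one_mul]
  have hinnerξv : (inner ℝ ξ v : ℝ) = (-1) ^ k := by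
    rw [hv, hsξ, show θ₀ - a = 0 - k * π by rw [hθ₀def]; ring,
      Real.cos_sub_int_mul_pi, Real.cos_zero, mul_one]
  have hξv : ξ = v ∨ ξ = -v := by
    rcases Int.even_or_odd k with he | ho
    · left
      have h1 : (inner ℝ ξ v : ℝ) = 1 := by rw [hinnerξv, he.neg_one_zpow]
      exact (inner_eq_one_iff_of_norm_eq_one hξ (norm_u θ₀)).mp h1
    · right
      have h1 : (inner ℝ ξ (-v) : ℝ) = 1 := by
        rw [inner_neg_right, hinnerξv, ho.neg_one_zpow, neg_neg]
      exact (inner_eq_one_iff_of_norm_eq_one hξ (by rw [norm_neg]; exact norm_u θ₀)).mp h1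
  obtain ⟨M, hM0, hEv⟩ : ∃ M : ℝ, 0 ≤ M ∧ ∀ᶠ θ in nhdsWithin θ₀ {θ₀}ᶜ,
      |f (inner ℝ ξ (u θ) : ℝ)| - M ≤ dI (inner ℝ ξ (u θ) : ℝ) (inner ℝ η (u θ) : ℝ) := by
    by_cases hηv : η = v ∨ η = -v
    · refine ⟨0, le_refl 0, Filter.Eventually.of_forall fun θ => ?_⟩
      have hηξ : η = -ξ := by
        rcases hξv with h1 | h1 <;> rcases hηv with h2 | h2
        · exact absurd (h1.trans h2.symm) hne
        · rw [h2, h1]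
        · rw [h2, h1, neg_neg]
        · exact absurd (h1.trans h2.symm) hne
      rw [hηξ]
      have hni : (inner ℝ (-ξ) (u θ) : ℝ) = -(inner ℝ ξ (u θ) : ℝ) := inner_neg_left ξ (u θ)
      rw [hni, dI, f_neg, sub_neg_eq_add,
        show f (inner ℝ ξ (u θ) : ℝ) + f (inner ℝ ξ (u θ) : ℝ) = 2 * f (inner ℝ ξ (u θ) : ℝ) by ring,
        abs_mul]
      have := abs_nonneg (f (inner ℝ ξ (u θ) : ℝ))
      rw [show |(2:ℝ)| = 2 by norm_num]
      linarith
    · push_neg at hηv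
      have hb1' : |(inner ℝ η v : ℝ)| ≤ 1 := by
        have := abs_real_inner_le_norm η v
        rwa [hη, norm_u, one_mul] at this
      have hblt : |(inner ℝ η v : ℝ)| < 1 := by
        rcases lt_or_eq_of_le hb1' with h | h
        · exact h
        · exfalso
          rcases (abs_eq zero_le_one).mp h with h1 | h1
          · exact hηv.1 ((inner_eq_one_iff_of_norm_eq_one hη (norm_u θ₀)).mp h1)
          · have h2 : (inner ℝ η (-v) : ℝ) = 1 := by rw [inner_neg_right, h1, neg_neg]
            exact hηv.2 ((inner_eq_one_iff_of_norm_eq_one hη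
              (by rw [norm_neg]; exact norm_u θ₀)).mp h2)
      set r : ℝ := (1 + |(inner ℝ η v : ℝ)|) / 2 with hrdef
      have hr1 : r < 1 := by rw [hrdef]; linarith
      have hrc : |(inner ℝ η v : ℝ)| < r := by rw [hrdef]; linarith
      have hr0 : (0:ℝ) ≤ r := by positivity
      refine ⟨r / (1 - r), div_nonneg hr0 (by linarith), ?_⟩
      have hcont : ContinuousAt (fun θ => |(inner ℝ η (u θ) : ℝ)|) θ₀ := by
        have heq : (fun θ => |(inner ℝ η (u θ) : ℝ)|) = fun θ => |Real.cos (θ - b)| :=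
          funext fun θ => by rw [hsη]
        rw [heq]
        exact ((Real.continuous_cos.comp (continuous_sub_right b)).abs).continuousAt
      have hev0 : ∀ᶠ θ in nhds θ₀, |(inner ℝ η (u θ) : ℝ)| < r :=
        hcont.tendsto.eventually_lt_const hrc
      refine (hev0.filter_mono nhdsWithin_le_nhds).mono fun θ hθ => ?_
      have h1 : |f (inner ℝ η (u θ) : ℝ)| ≤ r / (1 - r) := f_upper hr1 hθ.le
      have h2 := abs_sub_abs_le_abs_sub (f (inner ℝ ξ (u θ) : ℝ)) (f (inner ℝ η (u θ) : ℝ))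
      rw [dI]
      linarith
  apply not_intervalIntegrable_of_sub_inv_isBigO_punctured (c := θ₀) ?_ (ne_of_lt hπ) ?_
  · rw [Asymptotics.isBigO_iff]
    refine ⟨1, ?_⟩
    have hδ0 : (0:ℝ) < min 1 (2 * (M + 1))⁻¹ := lt_min one_pos (by positivity)
    have hball : ∀ᶠ θ in nhdsWithin θ₀ {θ₀}ᶜ, |θ - θ₀| < min 1 (2 * (M + 1))⁻¹ :=
      (eventually_abs_sub_lt θ₀ hδ0).filter_mono nhdsWithin_le_nhds
    filter_upwards [hEv, hball, self_mem_nhdsWithin] with θ h1 h2 h3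
    have hne' : θ - θ₀ ≠ 0 := sub_ne_zero.mpr h3
    have h0 : 0 < |θ - θ₀| := abs_pos.mpr hne'
    have hlow : ((θ - θ₀) ^ 2)⁻¹ ≤ |f (inner ℝ ξ (u θ) : ℝ)| :=
      f_lower hne' (le_of_lt (lt_of_lt_of_le h2 (min_le_left _ _))) (habsθ θ)
    have harith := aux_arith hM0 h0 (lt_of_lt_of_le h2 (min_le_right _ _))
    have hg0 : 0 ≤ dI (inner ℝ ξ (u θ) : ℝ) (inner ℝ η (u θ) : ℝ) := abs_nonneg _
    rw [Real.norm_eq_abs, abs_inv, Real.norm_eq_abs, abs_of_nonneg hg0, one_mul]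
    calc |θ - θ₀|⁻¹ ≤ ((θ - θ₀) ^ 2)⁻¹ - M := harith
      _ ≤ |f (inner ℝ ξ (u θ) : ℝ)| - M := by linarith
      _ ≤ dI (inner ℝ ξ (u θ) : ℝ) (inner ℝ η (u θ) : ℝ) := h1
  · rw [Set.uIcc_of_le hπ.le]
    exact ⟨hθ₀0, hθ₀π.le⟩
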